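/- arXiv:1211.5968 — 3 statements merged into one kernel-verified Lean document; each statement's English description precedes it below -/
import Mathlib

section
/- Let μ > 0, α > 0 and set λ = μ·α/(1+α). Then for every real N > 1, every δ ∈ (0,1) and every real x ≥ 0 with 1+x ≤ δ·N^α, one has λ − μ·log(1+x)/(log(1+x)+log N) ≥ μ·log(1/δ) / ((α+1)²·log N). -/
/-- Uniform positive drift of order `1/log N` below the level `δ·N^α` for the
saturated one-dimensional queue with `λ = μ·α/(1+α)`. -/
theorem stmt1 (μ α : ℝ) (hμ : 0 < μ) (hα : 0 < α) (lam : ℝ)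
    (hlam : lam = μ * α / (1 + α)) (N : ℝ) (hN : 1 < N)
    (δ : ℝ) (hδ0 : 0 < δ) (hδ1 : δ < 1) (x : ℝ) (hx : 0 ≤ x)
    (hxb : 1 + x ≤ δ * N ^ α) :
    lam - μ * (Real.log (1 + x) / (Real.log (1 + x) + Real.log N)) ≥
      μ * Real.log (1 / δ) / ((α + 1) ^ 2 * Real.log N) := by
  subst hlam
  set L := Real.log (1 + x) with hLdef
  set n := Real.log N with hndef
  have hn : 0 < n := Real.log_pos hN
  have hL0 : 0 ≤ L := Real.log_nonneg (by linarith)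
  have hLle : L ≤ Real.log δ + α * n := by
    have h1 : Real.log (1 + x) ≤ Real.log (δ * N ^ α) := by
      apply Real.log_le_log (by linarith) hxb
    rwa [Real.log_mul (ne_of_gt hδ0) (by positivity),
      Real.log_rpow (by linarith)] at h1
  have hd : Real.log (1 / δ) = -Real.log δ := by rw [one_div, Real.log_inv]
  have hdpos : 0 < -Real.log δ := by
    have := Real.log_neg hδ0 hδ1; linarith
  have hden : 0 < L + n := by linarith
  have hα1 : (0:ℝ) < 1 + α := by linarith
  have h1 : μ * α / (1 + α) - μ * (L / (L + n)) = μ * (α * n - L) / ((1 + α) * (L + n)) := by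
    field_simp; ring
  rw [hd, ge_iff_le, h1, div_le_div_iff₀ (by positivity) (by positivity)]
  have hdle : -Real.log δ ≤ α * n - L := by linarith
  nlinarith [mul_pos hμ hn, mul_nonneg (mul_nonneg hμ.le hn.le) hL0,
    mul_nonneg (mul_nonneg (mul_nonneg hμ.le hn.le) hL0) hα.le,
    mul_le_mul_of_nonneg_right hdle (mul_nonneg (mul_nonneg hμ.le hn.le) (by positivity : (0:ℝ) ≤ (1+α)^2)),
    mul_le_mul_of_nonneg_right (by linarith : L + n ≤ (1+α)*n) (mul_nonneg (mul_nonneg hμ.le hdpos.le) hα1.le)]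
end

section
/- For all reals 0 < a < b, the supremum over t ∈ [a,b] of | ∫₀ᵗ ((t−v)/(1+t−v))·(log N)·N^{−v} dv − t/(1+t) | tends to 0 as the real parameter N tends to +∞. -/
open Filter Topology

lemma exp_int (c t : ℝ) :
    ∫ v in (0:ℝ)..t, c * Real.exp (-(c*v)) = 1 - Real.exp (-(c*t)) := by
  have hderiv : ∀ v : ℝ, HasDerivAt (fun v => -Real.exp (-(c*v)))
      (c * Real.exp (-(c*v))) v := by
    intro v
    have h1 : HasDerivAt (fun v : ℝ => -(c*v)) (-(c*1)) v :=
      ((hasDerivAt_id v).const_mul c).neg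
    have h2 := (Real.hasDerivAt_exp (-(c*v))).comp v h1
    have h3 := h2.neg
    rw [show -(Real.exp (-(c*v)) * -(c*1)) = c * Real.exp (-(c*v)) by ring] at h3
    exact h3
  rw [intervalIntegral.integral_eq_sub_of_hasDerivAt (fun v _ => hderiv v)
    ((by fun_prop : Continuous fun v : ℝ => c * Real.exp (-(c*v))).intervalIntegrable 0 t)]
  simp
  ring

lemma key (c t : ℝ) (hc : 1 ≤ c) (ht : 0 ≤ t) :
    |(∫ v in (0:ℝ)..t, (t - v)/(1 + t - v) * (c * Real.exp (-(c*v)))) - t/(1+t)|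
      ≤ 4/c + Real.exp (-(c*t)) := by
  have hc0 : (0:ℝ) < c := lt_of_lt_of_le one_pos hc
  have ht1 : (0:ℝ) < 1 + t := by linarith
  have hIcc : Set.uIcc (0:ℝ) t = Set.Icc 0 t := Set.uIcc_of_le ht
  have hcont : ContinuousOn (fun v => (t - v)/(1 + t - v)) (Set.uIcc (0:ℝ) t) := by
    apply ContinuousOn.div (by fun_prop) (by fun_prop)
    intro v hv
    rw [hIcc] at hv
    have : v ≤ t := hv.2
    exact (by linarith : (0:ℝ) < 1 + t - v).ne'
  have hce : Continuous fun v : ℝ => c * Real.exp (-(c*v)) := by fun_prop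
  -- integrability of pieces
  have hint1 : IntervalIntegrable
      (fun v => ((t - v)/(1 + t - v) - t/(1+t)) * (c * Real.exp (-(c*v)))) MeasureTheory.volume 0 t :=
    ((hcont.sub continuousOn_const).mul hce.continuousOn).intervalIntegrable
  have hint2 : IntervalIntegrable
      (fun v => t/(1+t) * (c * Real.exp (-(c*v)))) MeasureTheory.volume 0 t :=
    (by fun_prop : Continuous fun v : ℝ => t/(1+t) * (c * Real.exp (-(c*v)))).intervalIntegrable 0 t
  have hsplit : (∫ v in (0:ℝ)..t, (t - v)/(1 + t - v) * (c * Real.exp (-(c*v))))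
      = (∫ v in (0:ℝ)..t, ((t - v)/(1 + t - v) - t/(1+t)) * (c * Real.exp (-(c*v))))
        + t/(1+t) * (1 - Real.exp (-(c*t))) := by
    rw [← exp_int c t, ← intervalIntegral.integral_const_mul,
      ← intervalIntegral.integral_add hint1 hint2]
    congr 1
    funext v
    ring
  set I := ∫ v in (0:ℝ)..t, ((t - v)/(1 + t - v) - t/(1+t)) * (c * Real.exp (-(c*v))) with hI
  have hg01 : 0 ≤ t/(1+t) ∧ t/(1+t) ≤ 1 := by
    constructor
    · positivity
    · rw [div_le_one ht1]; linarith
  -- bound |I|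
  have hIb : |I| ≤ 4/c := by
    have habs : |I| ≤ ∫ v in (0:ℝ)..t,
        |((t - v)/(1 + t - v) - t/(1+t)) * (c * Real.exp (-(c*v)))| :=
      intervalIntegral.abs_integral_le_integral_abs ht
    have hmono : (∫ v in (0:ℝ)..t,
        |((t - v)/(1 + t - v) - t/(1+t)) * (c * Real.exp (-(c*v)))|)
        ≤ ∫ v in (0:ℝ)..t, 2 * Real.exp (-(c/2*v)) := by
      apply intervalIntegral.integral_mono_on ht hint1.abs
        ((by fun_prop : Continuous fun v : ℝ => 2 * Real.exp (-(c/2*v))).intervalIntegrable 0 t)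
      intro v hv
      have hv0 : 0 ≤ v := hv.1
      have hvt : v ≤ t := hv.2
      have hd1 : (1:ℝ) ≤ 1 + t - v := by linarith
      have hne : (1 + t - v) ≠ 0 := by linarith
      have heq : (t - v)/(1 + t - v) - t/(1+t) = -(v / ((1+t-v)*(1+t))) := by
        field_simp
        ring
      have hgd : |(t - v)/(1 + t - v) - t/(1+t)| ≤ v := by
        rw [heq, abs_neg, abs_of_nonneg (by positivity)]
        exact div_le_self hv0 (by nlinarith)
      have hexp : Real.exp (-(c*v)) = Real.exp (-(c/2*v)) * Real.exp (-(c/2*v)) := by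
        rw [← Real.exp_add]; ring_nf
      have hx : c/2*v ≤ Real.exp (c/2*v) := by
        have := Real.add_one_le_exp (c/2*v); linarith
      have hxe : c/2*v * Real.exp (-(c/2*v)) ≤ 1 := by
        have h := mul_le_mul_of_nonneg_right hx (Real.exp_pos (-(c/2*v))).le
        rwa [← Real.exp_add, add_neg_cancel, Real.exp_zero] at h
      have hvb : v * (c * Real.exp (-(c*v))) ≤ 2 * Real.exp (-(c/2*v)) := by
        rw [hexp]
        have h2 : v * (c * (Real.exp (-(c/2*v)) * Real.exp (-(c/2*v))))
            = 2 * (c/2*v * Real.exp (-(c/2*v))) * Real.exp (-(c/2*v)) := by ring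
        rw [h2]
        have := (Real.exp_pos (-(c/2*v))).le
        nlinarith
      calc |((t - v)/(1 + t - v) - t/(1+t)) * (c * Real.exp (-(c*v)))|
          = |(t - v)/(1 + t - v) - t/(1+t)| * (c * Real.exp (-(c*v))) := by
            rw [abs_mul, abs_of_nonneg (show (0:ℝ) ≤ c * Real.exp (-(c*v)) by positivity)]
        _ ≤ v * (c * Real.exp (-(c*v))) := by
            apply mul_le_mul_of_nonneg_right hgd (by positivity)
        _ ≤ 2 * Real.exp (-(c/2*v)) := hvb
    have hbint : (∫ v in (0:ℝ)..t, 2 * Real.exp (-(c/2*v))) ≤ 4/c := by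
      have h := exp_int (c/2) t
      have heq2 : (fun v : ℝ => 2 * Real.exp (-(c/2*v)))
          = fun v => (4/c) * (c/2 * Real.exp (-(c/2*v))) := by
        funext v; field_simp; ring
      rw [heq2, intervalIntegral.integral_const_mul, h]
      have he := (Real.exp_pos (-(c/2*t))).le
      have : 1 - Real.exp (-(c/2*t)) ≤ 1 := by linarith
      calc 4/c * (1 - Real.exp (-(c/2*t))) ≤ 4/c * 1 := by
            apply mul_le_mul_of_nonneg_left this (by positivity)
        _ = 4/c := mul_one _
    linarith
  -- assemble
  rw [hsplit]
  have hstep : I + t/(1+t) * (1 - Real.exp (-(c*t))) - t/(1+t)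
      = I - t/(1+t) * Real.exp (-(c*t)) := by ring
  rw [hstep]
  have h2 : |t/(1+t) * Real.exp (-(c*t))| ≤ Real.exp (-(c*t)) := by
    rw [abs_mul, abs_of_nonneg hg01.1, abs_of_nonneg (Real.exp_pos _).le]
    nlinarith [Real.exp_pos (-(c*t)), hg01.1, hg01.2]
  calc |I - t/(1+t) * Real.exp (-(c*t))| ≤ |I| + |t/(1+t) * Real.exp (-(c*t))| := abs_sub _ _
    _ ≤ 4/c + Real.exp (-(c*t)) := add_le_add hIb h2

/-- Uniform identification of the drift `t/(1+t)` over `t ∈ [a,b]` as `N → ∞`. -/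
theorem stmt4 (a b : ℝ) (ha : 0 < a) (hab : a < b) :
    Tendsto (fun N : ℝ =>
        ⨆ t : Set.Icc a b,
          |(∫ v in (0:ℝ)..(t:ℝ), ((t:ℝ) - v) / (1 + (t:ℝ) - v) * (Real.log N * N ^ (-v))) -
            (t:ℝ) / (1 + (t:ℝ))|)
      atTop (𝓝 0) := by
  haveI : Nonempty (Set.Icc a b) := ⟨⟨a, le_refl a, hab.le⟩⟩
  have hB : Tendsto (fun N : ℝ => 4 / Real.log N + Real.exp (-(Real.log N * a)))
      atTop (𝓝 0) := by
    have h1 : Tendsto (fun N : ℝ => 4 / Real.log N) atTop (𝓝 0) := by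
      have := Real.tendsto_log_atTop.inv_tendsto_atTop
      have h := this.const_mul (4:ℝ)
      simpa [div_eq_mul_inv] using h
    have h2 : Tendsto (fun N : ℝ => Real.exp (-(Real.log N * a))) atTop (𝓝 0) := by
      apply Real.tendsto_exp_atBot.comp
      apply tendsto_neg_atTop_atBot.comp
      exact Real.tendsto_log_atTop.atTop_mul_const ha
    simpa using h1.add h2
  apply tendsto_of_tendsto_of_tendsto_of_le_of_le' tendsto_const_nhds hB
  · exact Eventually.of_forall fun N => Real.iSup_nonneg fun t => abs_nonneg _
  · filter_upwards [eventually_ge_atTop (Real.exp 1)] with N hN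
    have hNpos : (0:ℝ) < N := lt_of_lt_of_le (Real.exp_pos 1) hN
    have hc : 1 ≤ Real.log N := by
      rw [← Real.log_exp 1]
      exact Real.log_le_log (Real.exp_pos 1) hN
    apply ciSup_le
    intro t
    have ht0 : 0 ≤ (t:ℝ) := le_trans ha.le t.2.1
    have hrw : ∀ v : ℝ, Real.log N * N ^ (-v)
        = Real.log N * Real.exp (-(Real.log N * v)) := by
      intro v
      rw [Real.rpow_def_of_pos hNpos]
      ring_nf
    simp only [hrw]
    calc |(∫ v in (0:ℝ)..(t:ℝ), ((t:ℝ) - v) / (1 + (t:ℝ) - v)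
            * (Real.log N * Real.exp (-(Real.log N * v)))) - (t:ℝ) / (1 + (t:ℝ))|
        ≤ 4 / Real.log N + Real.exp (-(Real.log N * (t:ℝ))) := key (Real.log N) t hc ht0
      _ ≤ 4 / Real.log N + Real.exp (-(Real.log N * a)) := by
          have : Real.log N * a ≤ Real.log N * (t:ℝ) :=
            mul_le_mul_of_nonneg_left t.2.1 (by linarith)
          have := Real.exp_le_exp.mpr (neg_le_neg this)
          linarith
end

section
/- Let μ > 0, α > 0, δ ∈ (0,1], T > 0, and set K = μ/(1+α)². Let h : [0,T] → [δ,1] be differentiable with h(0) = δ and h'(t) = −K·log h(t). For each real N with (α+1)·log N + log δ > 0, let h_N : [0,T] → [δ,1] be differentiable with h_N(0) = δ and h_N'(t) = −(μ/(α+1))·log h_N(t) / (α + 1 + log h_N(t)/log N). Then there exist C > 0 and N₀ such that for all N ≥ N₀ and all t ∈ [0,T], |h_N(t) − h(t)| ≤ C / log N. -/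
set_option maxHeartbeats 1000000


/-- The `N`-dependent centering function `h_N` of the CLT converges to the fluid
limit `h` at the slow rate `1/log N`, uniformly on `[0,T]`. -/
theorem stmt8 (μ α δ T : ℝ) (hμ : 0 < μ) (hα : 0 < α) (hδ : δ ∈ Set.Ioc (0:ℝ) 1)
    (hT : 0 < T) (K : ℝ) (hK : K = μ / (1 + α) ^ 2)
    (h : ℝ → ℝ) (hmap : ∀ t ∈ Set.Icc (0:ℝ) T, h t ∈ Set.Icc δ 1)
    (h0 : h 0 = δ)
    (hderiv : ∀ t ∈ Set.Icc (0:ℝ) T, HasDerivAt h (-K * Real.log (h t)) t)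
    (hN : ℝ → ℝ → ℝ)
    (hNmap : ∀ N : ℝ, 0 < (α + 1) * Real.log N + Real.log δ →
      ∀ t ∈ Set.Icc (0:ℝ) T, hN N t ∈ Set.Icc δ 1)
    (hN0 : ∀ N : ℝ, 0 < (α + 1) * Real.log N + Real.log δ → hN N 0 = δ)
    (hNderiv : ∀ N : ℝ, 0 < (α + 1) * Real.log N + Real.log δ →
      ∀ t ∈ Set.Icc (0:ℝ) T,
        HasDerivAt (hN N)
          (-(μ / (α + 1)) * Real.log (hN N t) / (α + 1 + Real.log (hN N t) / Real.log N)) t) :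
    ∃ C > 0, ∃ N₀ : ℝ, ∀ N ≥ N₀, 0 < (α + 1) * Real.log N + Real.log δ →
      ∀ t ∈ Set.Icc (0:ℝ) T, |hN N t - h t| ≤ C / Real.log N := by
  obtain ⟨hδ0, hδ1⟩ := hδ
  have hα1 : (0:ℝ) < α + 1 := by linarith
  have hKpos : 0 < K := by rw [hK]; positivity
  set L : ℝ := K / δ with hLdef
  have hLpos : 0 < L := div_pos hKpos hδ0
  -- Lipschitz constant of the vector field x ↦ -K log x on [δ, 1]
  have hlip : LipschitzOnWith L.toNNReal (fun x => -K * Real.log x) (Set.Icc δ 1) := by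
    apply (convex_Icc δ 1).lipschitzOnWith_of_nnnorm_hasDerivWithin_le
      (f' := fun x => -K / x)
    · intro x hx
      have hx0 : 0 < x := lt_of_lt_of_le hδ0 hx.1
      have := ((Real.hasDerivAt_log (ne_of_gt hx0)).const_mul (-K)).hasDerivWithinAt
        (s := Set.Icc δ 1)
      simpa [div_eq_mul_inv] using this
    · intro x hx
      have hx0 : 0 < x := lt_of_lt_of_le hδ0 hx.1
      rw [← NNReal.coe_le_coe, coe_nnnorm, Real.coe_toNNReal _ hLpos.le]
      rw [Real.norm_eq_abs, abs_div, abs_neg, abs_of_pos hKpos, abs_of_pos hx0]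
      exact div_le_div_of_nonneg_left hKpos.le hδ0 hx.1
  set C1 : ℝ := 2 * μ * (Real.log δ) ^ 2 / (α + 1) ^ 3 + 1 with hC1def
  have hC1pos : 0 < C1 := by positivity
  set C : ℝ := C1 * Real.exp (L * T) / L with hCdef
  have hCpos : 0 < C := by positivity
  refine ⟨C, hCpos, Real.exp (max 1 (2 * (-Real.log δ) / (α + 1))), ?_⟩
  intro N hNge hNlog t ht
  have hNpos : (0:ℝ) < N :=
    lt_of_lt_of_le (Real.exp_pos _) hNge
  have hmaxle : max 1 (2 * (-Real.log δ) / (α + 1)) ≤ Real.log N := by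
    rw [Real.le_log_iff_exp_le hNpos]; exact hNge
  have hLN1 : 1 ≤ Real.log N := le_trans (le_max_left _ _) hmaxle
  have hLNpos : 0 < Real.log N := lt_of_lt_of_le one_pos hLN1
  have hlogδle : Real.log δ ≤ 0 := Real.log_nonpos hδ0.le hδ1
  -- lower bound on the denominator
  have hden : -(α + 1) / 2 ≤ Real.log δ / Real.log N := by
    have h2 : 2 * (-Real.log δ) / (α + 1) ≤ Real.log N :=
      le_trans (le_max_right _ _) hmaxle
    rw [div_le_iff₀ hα1] at h2
    rw [le_div_iff₀ hLNpos]
    nlinarith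
  -- the key pointwise bound on the difference of vector fields
  have bound : ∀ x ∈ Set.Icc δ 1,
      |(-(μ / (α + 1)) * Real.log x / (α + 1 + Real.log x / Real.log N))
        - (-K * Real.log x)| ≤ C1 / Real.log N := by
    intro x hx
    set l := Real.log x with hl
    have hl0 : l ≤ 0 := Real.log_nonpos (lt_of_lt_of_le hδ0 hx.1).le hx.2
    have hlδ : Real.log δ ≤ l := Real.log_le_log hδ0 hx.1
    have hlLN : Real.log δ / Real.log N ≤ l / Real.log N := by gcongr
    have hD2 : (α + 1) / 2 ≤ α + 1 + l / Real.log N := by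
      have := le_trans hden hlLN
      linarith
    have hDpos : 0 < α + 1 + l / Real.log N := lt_of_lt_of_le (by linarith) hD2
    set D := α + 1 + l / Real.log N with hDdef
    have hlval : l = Real.log N * (D - (α + 1)) := by
      rw [hDdef]; field_simp; ring
    have key : -(μ / (α + 1)) * l / D - (-K * l)
        = (μ / (α + 1) ^ 2) * (l ^ 2 / (Real.log N * D)) := by
      rw [hK, hlval]
      field_simp [hDpos.ne', hLNpos.ne', hα1.ne']
      ring
    rw [key, abs_of_nonneg (by positivity)]
    have hlsq : l ^ 2 ≤ (Real.log δ) ^ 2 := by nlinarith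
    have hfrac : l ^ 2 / (Real.log N * (α + 1 + l / Real.log N))
        ≤ (Real.log δ) ^ 2 / (Real.log N * ((α + 1) / 2)) := by
      apply div_le_div₀ (by positivity) hlsq (by positivity)
      exact mul_le_mul_of_nonneg_left hD2 hLNpos.le
    have heq : (μ / (α + 1) ^ 2) * ((Real.log δ) ^ 2 / (Real.log N * ((α + 1) / 2)))
        = (2 * μ * (Real.log δ) ^ 2 / (α + 1) ^ 3) / Real.log N := by
      field_simp
    calc (μ / (α + 1) ^ 2) * (l ^ 2 / (Real.log N * (α + 1 + l / Real.log N)))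
        ≤ (μ / (α + 1) ^ 2) * ((Real.log δ) ^ 2 / (Real.log N * ((α + 1) / 2))) :=
          mul_le_mul_of_nonneg_left hfrac (by positivity)
      _ = (2 * μ * (Real.log δ) ^ 2 / (α + 1) ^ 3) / Real.log N := heq
      _ ≤ C1 / Real.log N := by
          have hle : 2 * μ * (Real.log δ) ^ 2 / (α + 1) ^ 3 ≤ C1 := by
            rw [hC1def]; linarith
          gcongr
  -- apply the Grönwall-type estimate for approximate trajectories
  have main := dist_le_of_approx_trajectories_ODE_of_mem
    (v := fun _ x => -K * Real.log x) (s := fun _ => Set.Icc δ 1)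
    (K := L.toNNReal) (fun _ _ => hlip)
    (f := hN N)
    (f' := fun t => -(μ / (α + 1)) * Real.log (hN N t)
      / (α + 1 + Real.log (hN N t) / Real.log N))
    (g := h) (g' := fun t => -K * Real.log (h t))
    (a := 0) (b := T) (εf := C1 / Real.log N) (εg := 0) (δ := 0)
    (fun s hs => ((hNderiv N hNlog s hs).continuousAt).continuousWithinAt)
    (fun s hs => ((hNderiv N hNlog s (Set.Ico_subset_Icc_self hs)).hasDerivWithinAt))
    (fun s hs => by
      rw [Real.dist_eq]
      exact bound _ (hNmap N hNlog s (Set.Ico_subset_Icc_self hs)))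
    (fun s hs => hNmap N hNlog s (Set.Ico_subset_Icc_self hs))
    (fun s hs => ((hderiv s hs).continuousAt).continuousWithinAt)
    (fun s hs => ((hderiv s (Set.Ico_subset_Icc_self hs)).hasDerivWithinAt))
    (fun s hs => by rw [dist_self])
    (fun s hs => hmap s (Set.Ico_subset_Icc_self hs))
    (by rw [hN0 N hNlog, h0, dist_self])
    t ht
  rw [Real.dist_eq] at main
  refine le_trans main ?_
  rw [gronwallBound_of_K_ne_0 (by
    simp only [ne_eq, NNReal.coe_eq_zero, Real.toNNReal_eq_zero, not_le]; exact hLpos)]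
  rw [Real.coe_toNNReal _ hLpos.le]
  have hexp : Real.exp (L * (t - 0)) - 1 ≤ Real.exp (L * T) := by
    have : L * (t - 0) ≤ L * T := by
      have := ht.2
      nlinarith
    nlinarith [Real.exp_le_exp.mpr this]
  have h1 : (0:ℝ) * Real.exp (L * (t - 0)) + (C1 / Real.log N + 0) / L
      * (Real.exp (L * (t - 0)) - 1)
      ≤ (C1 / Real.log N) / L * Real.exp (L * T) := by
    rw [zero_mul, zero_add, add_zero]
    exact mul_le_mul_of_nonneg_left hexp (by positivity)
  refine le_trans h1 (le_of_eq ?_)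
  rw [hCdef]
  field_simp
end
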